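/- Let n ≥ 3, let U ⊆ ℝⁿ be open, and let a : U → (symmetric invertible n×n real matrices) be a smooth matrix field in Kundt form with data H, W_a, h_{ab}, and let Γ^k_{ij} denote its Christoffel symbols. Let b be the constant covector field b_i = δ^u_i (i.e. b = du). Then the covariant derivative ∇_i b_j := ∂_i b_j − Σ_k Γ^k_{ij} b_k satisfies ∇_i b_j = −(1/2) ∂_v a_{ij} on U; equivalently, Γ^u_{ij} = (1/2) ∂_v a_{ij} for all i, j. -/

import Mathlib

open Matrix
open scoped BigOperators

noncomputable section

/-- Partial derivative of `f : ℝⁿ → ℝ` in the `i`-th coordinate direction at `p`. -/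
def pd {n : ℕ} (i : Fin n) (f : (Fin n → ℝ) → ℝ) (p : Fin n → ℝ) : ℝ :=
  fderiv ℝ f p (Pi.single i 1)

/-- Christoffel symbols `Γ^k_{ij}` of a matrix field `a`. -/
def christoffel {n : ℕ} (a : (Fin n → ℝ) → Matrix (Fin n) (Fin n) ℝ)
    (k i j : Fin n) (p : Fin n → ℝ) : ℝ :=
  (1 / 2) * ∑ l, (a p)⁻¹ k l *
    (pd i (fun q => a q j l) p + pd j (fun q => a q i l) p - pd l (fun q => a q i j) p)

/-- The coordinate index `u` (the first coordinate). -/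
def uIdx {n : ℕ} (_hn : 3 ≤ n) : Fin n := ⟨0, by omega⟩

/-- The coordinate index `v` (the second coordinate). -/
def vIdx {n : ℕ} (_hn : 3 ≤ n) : Fin n := ⟨1, by omega⟩

/-- The embedding of the transverse indices `{3,…,n}` (zero-based: `{2,…,n-1}`). -/
def embIdx {n : ℕ} (i : Fin (n - 2)) : Fin n := ⟨(i : ℕ) + 2, by have := i.isLt; omega⟩

/-- A matrix is in Kundt form with data `H`, `W`, `h`. -/
def IsKundt {n : ℕ} (hn : 3 ≤ n) (M : Matrix (Fin n) (Fin n) ℝ)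
    (H : ℝ) (W : Fin n → ℝ) (h : Fin n → Fin n → ℝ) : Prop :=
  M (uIdx hn) (uIdx hn) = H ∧
  M (uIdx hn) (vIdx hn) = -1 ∧ M (vIdx hn) (uIdx hn) = -1 ∧ M (vIdx hn) (vIdx hn) = 0 ∧
  (∀ a : Fin n, 2 ≤ (a : ℕ) →
    M (uIdx hn) a = W a / 2 ∧ M a (uIdx hn) = W a / 2 ∧
    M (vIdx hn) a = 0 ∧ M a (vIdx hn) = 0) ∧
  (∀ a b : Fin n, 2 ≤ (a : ℕ) → 2 ≤ (b : ℕ) → M a b = h a b)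

/-- The affine Ricci tensor `R̄_{lk}` of a connection with coefficients `Γ^k_{ij}`. -/
def affineRicci {n : ℕ} (Γ : Fin n → Fin n → Fin n → (Fin n → ℝ) → ℝ)
    (l k : Fin n) (p : Fin n → ℝ) : ℝ :=
  (∑ i, pd i (Γ i k l) p) - pd k (fun q => ∑ i, Γ i i l q) p +
    ∑ i, ∑ m, (Γ i m i p * Γ m k l p - Γ i m k p * Γ m i l p)

/-- trichotomy for indices -/
lemma idx_cases {n : ℕ} (hn : 3 ≤ n) (j : Fin n) :
    j = uIdx hn ∨ j = vIdx hn ∨ 2 ≤ (j : ℕ) := by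
  rcases Nat.lt_or_ge (j : ℕ) 2 with hj | hj
  · interval_cases hj' : (j : ℕ)
    · left; exact Fin.ext hj'
    · right; left; exact Fin.ext hj'
  · right; right; exact hj

lemma pd_const_on {n : ℕ} {U : Set (Fin n → ℝ)} (hU : IsOpen U) {p : Fin n → ℝ}
    (hp : p ∈ U) (i : Fin n) {f : (Fin n → ℝ) → ℝ} {c : ℝ}
    (hf : ∀ q ∈ U, f q = c) : pd i f p = 0 := by
  have hev : f =ᶠ[nhds p] fun _ => c := by
    filter_upwards [hU.mem_nhds hp] with q hq using hf q hq
  rw [pd, hev.fderiv_eq, fderiv_fun_const]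
  simp

theorem stmt5 {n : ℕ} (hn : 3 ≤ n) (U : Set (Fin n → ℝ)) (hU : IsOpen U)
    (a : (Fin n → ℝ) → Matrix (Fin n) (Fin n) ℝ)
    (ha_smooth : ∀ i j, ContDiffOn ℝ (⊤ : ℕ∞) (fun p => a p i j) U)
    (ha_symm : ∀ p ∈ U, (a p).IsSymm) (ha_inv : ∀ p ∈ U, IsUnit (a p).det)
    (H : (Fin n → ℝ) → ℝ) (W : (Fin n → ℝ) → Fin n → ℝ)
    (h : (Fin n → ℝ) → Fin n → Fin n → ℝ)
    (hKundt : ∀ p ∈ U, IsKundt hn (a p) (H p) (W p) (h p)) :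
    ∀ p ∈ U, ∀ i j : Fin n,
      (pd i (fun _ => if j = uIdx hn then (1 : ℝ) else 0) p
          - ∑ k, christoffel a k i j p * (if k = uIdx hn then (1 : ℝ) else 0))
        = -(1 / 2) * pd (vIdx hn) (fun q => a q i j) p ∧
      christoffel a (uIdx hn) i j p = (1 / 2) * pd (vIdx hn) (fun q => a q i j) p := by
  intro p hp i j
  -- row v of a : a q (vIdx) m = if m = uIdx then -1 else 0
  have row_v : ∀ q ∈ U, ∀ m : Fin n, a q (vIdx hn) m = if m = uIdx hn then -1 else 0 := by
    intro q hq m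
    obtain ⟨_, h2, h3, h4, h5, _⟩ := hKundt q hq
    rcases idx_cases hn m with rfl | rfl | hm
    · simpa using h3
    · have : vIdx hn ≠ uIdx hn := by
        intro hh; exact absurd (congrArg Fin.val hh) (by simp [uIdx, vIdx])
      simpa [this] using h4
    · have : m ≠ uIdx hn := by
        intro hh; rw [hh] at hm; simp [uIdx] at hm
      simpa [this] using (h5 m hm).2.2.1
  -- column v of a : a q m (vIdx) = if m = uIdx then -1 else 0
  have col_v : ∀ q ∈ U, ∀ m : Fin n, a q m (vIdx hn) = if m = uIdx hn then -1 else 0 := by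
    intro q hq m
    obtain ⟨_, h2, h3, h4, h5, _⟩ := hKundt q hq
    rcases idx_cases hn m with rfl | rfl | hm
    · simpa using h2
    · have : vIdx hn ≠ uIdx hn := by
        intro hh; exact absurd (congrArg Fin.val hh) (by simp [uIdx, vIdx])
      simpa [this] using h4
    · have : m ≠ uIdx hn := by
        intro hh; rw [hh] at hm; simp [uIdx] at hm
      simpa [this] using (h5 m hm).2.2.2
  -- row u of the inverse
  have inv_row : ∀ l : Fin n, (a p)⁻¹ (uIdx hn) l = if l = vIdx hn then -1 else 0 := by
    intro l
    have hmul := Matrix.mul_nonsing_inv (a p) (ha_inv p hp)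
    have hvl := congrFun (congrFun hmul (vIdx hn)) l
    rw [Matrix.mul_apply] at hvl
    have hsum : ∑ m, a p (vIdx hn) m * (a p)⁻¹ m l = -((a p)⁻¹ (uIdx hn) l) := by
      rw [Finset.sum_congr rfl (fun m _ => by rw [row_v p hp m])]
      simp [ite_mul]
    rw [hsum, Matrix.one_apply] at hvl
    have : (a p)⁻¹ (uIdx hn) l = -(if vIdx hn = l then (1:ℝ) else 0) := by linarith
    rw [this]
    by_cases hl : l = vIdx hn
    · simp [hl]
    · simp [hl, Ne.symm hl]
  -- the key value of Γ^u
  have key : christoffel a (uIdx hn) i j p = (1 / 2) * pd (vIdx hn) (fun q => a q i j) p := by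
    rw [christoffel]
    have hsum : ∑ l, (a p)⁻¹ (uIdx hn) l *
        (pd i (fun q => a q j l) p + pd j (fun q => a q i l) p - pd l (fun q => a q i j) p)
        = -(pd i (fun q => a q j (vIdx hn)) p + pd j (fun q => a q i (vIdx hn)) p
            - pd (vIdx hn) (fun q => a q i j) p) := by
      rw [Finset.sum_congr rfl (fun l _ => by rw [inv_row l])]
      simp [ite_mul]
    rw [hsum]
    have d1 : pd i (fun q => a q j (vIdx hn)) p = 0 :=
      pd_const_on hU hp i (c := if j = uIdx hn then -1 else 0) (fun q hq => col_v q hq j)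
    have d2 : pd j (fun q => a q i (vIdx hn)) p = 0 :=
      pd_const_on hU hp j (c := if i = uIdx hn then -1 else 0) (fun q hq => col_v q hq i)
    rw [d1, d2]
    ring
  constructor
  · have d0 : pd i (fun _ => if j = uIdx hn then (1 : ℝ) else 0) p = 0 := by
      rw [pd, fderiv_fun_const]; simp
    have hsum : ∑ k, christoffel a k i j p * (if k = uIdx hn then (1 : ℝ) else 0)
        = christoffel a (uIdx hn) i j p := by
      simp [mul_ite]
    rw [d0, hsum, key]; ring
  · exact key

end
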